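/- Let M be a submodule of ℝ⟦x₁,…,xₙ⟧ᵖ and let r ∈ ℕ. Let Δ denote the complement of the diagram of initial exponents 𝒩(M) in ℕⁿ×{1,…,p}. Then the set {x^{(β,i)} : (β,i) ∈ Δ, |β| ≤ r} is a basis of an ℝ-linear complement of M + (x)^{r+1}ℝ⟦x⟧ᵖ in ℝ⟦x⟧ᵖ, where (x) denotes the maximal ideal of ℝ⟦x⟧ generated by x₁,…,xₙ. -/

import Mathlib

open Classical

/-- Index set `ℕⁿ × {1,…,p}` for coefficients of elements of `A⟦x₁,…,xₙ⟧ᵖ`. -/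
abbrev Idx (n p : ℕ) := (Fin n →₀ ℕ) × Fin p

/-- Total degree `|α|` of a multiindex. -/
def degF {n : ℕ} (α : Fin n →₀ ℕ) : ℕ := ∑ i, α i

/-- Lexicographic order on multiindices. -/
def lexLT {n : ℕ} (α β : Fin n →₀ ℕ) : Prop :=
  ∃ i : Fin n, (∀ j, j < i → α j = β j) ∧ α i < β i

/-- The total order on `ℕⁿ × {1,…,p}` comparing `(|α|, j, α)` lexicographically. -/
def idxLT {n p : ℕ} (a b : Idx n p) : Prop :=
  degF a.1 < degF b.1 ∨
    (degF a.1 = degF b.1 ∧ ((a.2 : ℕ) < (b.2 : ℕ) ∨ (a.2 = b.2 ∧ lexLT a.1 b.1)))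

def idxLE {n p : ℕ} (a b : Idx n p) : Prop := idxLT a b ∨ a = b

/-- Support of `F ∈ A⟦x⟧ᵖ`. -/
def suppV {n p : ℕ} {A : Type} [Semiring A] (F : Fin p → MvPowerSeries (Fin n) A) :
    Set (Idx n p) :=
  {d | MvPowerSeries.coeff (R := A) d.1 (F d.2) ≠ 0}

/-- `d` is the initial exponent `exp F` of `F`. -/
def IsExpOf {n p : ℕ} {A : Type} [Semiring A] (F : Fin p → MvPowerSeries (Fin n) A)
    (d : Idx n p) : Prop :=
  d ∈ suppV F ∧ ∀ d' ∈ suppV F, idxLE d d'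

/-- `S + ℕⁿ`, for `S ⊆ ℕⁿ × {1,…,p}`. -/
def setShift {n p : ℕ} (S : Set (Idx n p)) : Set (Idx n p) :=
  {d | ∃ s ∈ S, ∃ β : Fin n →₀ ℕ, d = (s.1 + β, s.2)}

/-- The diagram of initial exponents `𝒩(M) = {exp F : F ∈ M ∖ {0}}` of a submodule `M`
of `A⟦x⟧ᵖ`. -/
def diagramOf {n p : ℕ} {A : Type} [CommRing A]
    (M : Submodule (MvPowerSeries (Fin n) A) (Fin p → MvPowerSeries (Fin n) A)) :
    Set (Idx n p) :=
  {d | ∃ F ∈ M, F ≠ 0 ∧ IsExpOf F d}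

/-- `d` is a vertex of the diagram `𝒩`: `(𝒩 ∖ {d}) + ℕⁿ ≠ 𝒩`. -/
def IsVertex {n p : ℕ} (𝒩 : Set (Idx n p)) (d : Idx n p) : Prop :=
  setShift (𝒩 \ {d}) ≠ 𝒩

/-- `(α_i, j_i) + ℕⁿ`. -/
def DeltaFull {n p q : ℕ} (e : Fin q → Idx n p) (i : Fin q) : Set (Idx n p) :=
  {d | d.2 = (e i).2 ∧ ∃ β : Fin n →₀ ℕ, d.1 = (e i).1 + β}

/-- The sets `Δ_i` of Hironaka's division: `Δ_i = ((α_i,j_i) + ℕⁿ) ∖ (Δ_1 ∪ ⋯ ∪ Δ_{i−1})`. -/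
def Delta {n p q : ℕ} (e : Fin q → Idx n p) (i : Fin q) : Set (Idx n p) :=
  DeltaFull e i \ ⋃ (k : Fin q) (hk : k < i), Delta e k
termination_by i.val
decreasing_by exact hk

/-- The complementary region `Δ = ℕⁿ×{1,…,p} ∖ (Δ_1 ∪ ⋯ ∪ Δ_q)`. -/
def DeltaC {n p q : ℕ} (e : Fin q → Idx n p) : Set (Idx n p) :=
  (⋃ i : Fin q, Delta e i)ᶜ

-- sanity checks for instances used later

/-! ### Auxiliary material for the proof of `stmt6` -/

noncomputable section Stmt6Aux

open MvPowerSeries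

variable {n p : ℕ}

/-- Target of the order-embedding realizing `idxLT` as a lexicographic order. -/
abbrev L3 (n : ℕ) := ℕ ×ₗ (ℕ ×ₗ Lex (Fin n →₀ ℕ))

def toL3 (d : Idx n p) : L3 n := toLex (degF d.1, toLex ((d.2 : ℕ), toLex d.1))

lemma lexLT_iff {α β : Fin n →₀ ℕ} : lexLT α β ↔ toLex α < toLex β := by
  constructor
  · rintro ⟨i, h1, h2⟩; exact ⟨i, fun j hj => h1 j hj, h2⟩
  · rintro ⟨i, h1, h2⟩; exact ⟨i, fun j hj => h1 j hj, h2⟩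

lemma idxLT_iff_toL3 {a b : Idx n p} : idxLT a b ↔ toL3 a < toL3 b := by
  unfold toL3 idxLT
  rw [Prod.Lex.lt_iff, Prod.Lex.lt_iff]
  simp only [ofLex_toLex, Fin.val_inj, lexLT_iff]

lemma toL3_inj : Function.Injective (toL3 (n := n) (p := p)) := by
  intro a b h
  unfold toL3 at h
  have h1 : (degF a.1, toLex ((a.2 : ℕ), toLex a.1)) =
      (degF b.1, toLex ((b.2 : ℕ), toLex b.1)) := h
  have h2 := (Prod.ext_iff.mp h1).2
  have h3 : ((a.2 : ℕ), toLex a.1) = ((b.2 : ℕ), toLex b.1) := h2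
  have h4 := Prod.ext_iff.mp h3
  exact Prod.ext (by exact congrArg ofLex h4.2) (Fin.val_injective h4.1)

lemma idxLT_wf : WellFounded (idxLT (n := n) (p := p)) := by
  haveI : WellFoundedLT (Lex (Fin n →₀ ℕ)) := Finsupp.Lex.wellFoundedLT_of_finite
  have hwf : WellFounded ((· < ·) : L3 n → L3 n → Prop) := wellFounded_lt
  exact Subrelation.wf (fun {a b} h => idxLT_iff_toL3.mp h) (InvImage.wf toL3 hwf)

lemma idxLT_trichotomy (a b : Idx n p) : idxLT a b ∨ a = b ∨ idxLT b a := by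
  rcases lt_trichotomy (toL3 a) (toL3 b) with h | h | h
  · exact Or.inl (idxLT_iff_toL3.mpr h)
  · exact Or.inr (Or.inl (toL3_inj h))
  · exact Or.inr (Or.inr (idxLT_iff_toL3.mpr h))

lemma idxLT_trans {a b c : Idx n p} (h1 : idxLT a b) (h2 : idxLT b c) : idxLT a c :=
  idxLT_iff_toL3.mpr (lt_trans (idxLT_iff_toL3.mp h1) (idxLT_iff_toL3.mp h2))

lemma idxLT_irrefl (a : Idx n p) : ¬ idxLT a a := fun h =>
  lt_irrefl _ (idxLT_iff_toL3.mp h)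

lemma degF_add (α β : Fin n →₀ ℕ) : degF (α + β) = degF α + degF β := by
  unfold degF
  simp only [Finsupp.add_apply]
  exact Finset.sum_add_distrib

lemma degF_eq_zero {α : Fin n →₀ ℕ} (h : degF α = 0) : α = 0 := by
  unfold degF at h
  rw [Finset.sum_eq_zero_iff] at h
  ext i
  exact h i (Finset.mem_univ i)

lemma degF_single (i : Fin n) : degF (Finsupp.single i 1) = 1 := by
  unfold degF
  simp [Finsupp.single_apply]

lemma idxLE_deg {a b : Idx n p} (h : idxLE a b) : degF a.1 ≤ degF b.1 := by
  rcases h with h | rfl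
  · rcases h with h | ⟨h, _⟩
    · exact le_of_lt h
    · exact le_of_eq h
  · exact le_rfl

/-- The maximal ideal `(x₁,…,xₙ)` of `ℝ⟦x⟧`. -/
abbrev mxI (n : ℕ) : Ideal (MvPowerSeries (Fin n) ℝ) :=
  Ideal.span (Set.range (MvPowerSeries.X : Fin n → MvPowerSeries (Fin n) ℝ))

lemma constCoeff_eq_zero_of_mem {f : MvPowerSeries (Fin n) ℝ} (hf : f ∈ mxI n) :
    constantCoeff (σ := Fin n) (R := ℝ) f = 0 := by
  refine Submodule.span_induction ?_ ?_ ?_ ?_ hf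
  · rintro x ⟨i, rfl⟩; exact constantCoeff_X i
  · exact map_zero _
  · intro x y _ _ hx hy
    rw [map_add, hx, hy, add_zero]
  · intro a x _ hx
    rw [smul_eq_mul, map_mul, hx, mul_zero]

lemma coeff_eq_zero_of_mem_pow :
    ∀ s : ℕ, ∀ f : MvPowerSeries (Fin n) ℝ, f ∈ mxI n ^ s →
      ∀ α : Fin n →₀ ℕ, degF α < s → coeff (R := ℝ) α f = 0 := by
  intro s
  induction s with
  | zero => intro f _ α hα; omega
  | succ s ih =>
    intro f hf
    rw [pow_succ] at hf
    refine Submodule.mul_induction_on hf ?_ ?_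
    · intro m hm x hx α hα
      rw [coeff_mul]
      apply Finset.sum_eq_zero
      rintro ⟨β, γ⟩ hmem
      rw [Finset.HasAntidiagonal.mem_antidiagonal] at hmem
      have hmem' : β + γ = α := hmem
      show coeff (R := ℝ) β m * coeff (R := ℝ) γ x = 0
      by_cases hβ : degF β < s
      · rw [ih m hm β hβ, zero_mul]
      · have hdeg : degF β + degF γ = degF α := by rw [← degF_add, hmem']
        have hγ : γ = 0 := degF_eq_zero (by omega)
        rw [hγ, coeff_zero_eq_constantCoeff, constCoeff_eq_zero_of_mem hx, mul_zero]
    · intro x y hx hy α hα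
      rw [map_add, hx α hα, hy α hα, add_zero]

lemma mem_pow_of_coeff :
    ∀ s : ℕ, ∀ f : MvPowerSeries (Fin n) ℝ,
      (∀ α : Fin n →₀ ℕ, degF α < s → coeff (R := ℝ) α f = 0) → f ∈ mxI n ^ s := by
  intro s
  induction s with
  | zero => intro f _; simp
  | succ s ih =>
    intro f hf
    set g : Fin n → MvPowerSeries (Fin n) ℝ := fun i β =>
      if (∀ j, j < i → β j = 0) then coeff (R := ℝ) (β + Finsupp.single i 1) f else 0 with hg
    have hcg : ∀ (i : Fin n) (β : Fin n →₀ ℕ),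
        coeff (R := ℝ) β (g i) =
          if (∀ j, j < i → β j = 0) then coeff (R := ℝ) (β + Finsupp.single i 1) f else 0 := by
      intro i β; rw [coeff_apply]
    have hdecomp : f = ∑ i : Fin n, X i * g i := by
      apply MvPowerSeries.ext; intro α
      rw [map_sum]
      have hterm : ∀ i : Fin n, coeff (R := ℝ) α (X i * g i) =
          if (1 ≤ α i ∧ ∀ j, j < i → α j = 0) then coeff (R := ℝ) α f else 0 := by
        intro i
        rw [X_def, coeff_monomial_mul]
        by_cases h1 : Finsupp.single i 1 ≤ α
        · have h1' : 1 ≤ α i := Finsupp.single_le_iff.mp h1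
          rw [if_pos h1, one_mul, hcg]
          have hsub : ∀ j, j ≠ i → (α - Finsupp.single i 1 : Fin n →₀ ℕ) j = α j := by
            intro j hj
            rw [Finsupp.tsub_apply, Finsupp.single_eq_of_ne hj, tsub_zero]
          have hcancel : (α - Finsupp.single i 1) + Finsupp.single i 1 = α :=
            tsub_add_cancel_of_le h1
          by_cases h2 : ∀ j, j < i → α j = 0
          · rw [if_pos, if_pos ⟨h1', h2⟩, hcancel]
            intro j hj
            rw [hsub j (ne_of_lt hj), h2 j hj]
          · rw [if_neg, if_neg]
            · intro hc; exact h2 hc.2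
            · intro hc
              apply h2
              intro j hj
              rw [← hsub j (ne_of_lt hj)]
              exact hc j hj
        · rw [if_neg h1, if_neg]
          rintro ⟨hc1, -⟩
          exact h1 (Finsupp.single_le_iff.mpr hc1)
      rw [Finset.sum_congr rfl fun i _ => hterm i]
      by_cases hα : α = 0
      · subst hα
        rw [Finset.sum_eq_zero, hf 0 (by simpa [degF] using Nat.succ_pos s)]
        intro i _
        rw [if_neg]
        rintro ⟨hc1, -⟩
        simp at hc1
      · have hex : ∃ i : Fin n, α i ≠ 0 := by
          by_contra h
          push_neg at h
          exact hα (Finsupp.ext fun i => h i)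
        set S : Finset (Fin n) := Finset.univ.filter (fun i => α i ≠ 0) with hS
        have hSne : S.Nonempty := by
          obtain ⟨i, hi⟩ := hex
          exact ⟨i, by simp [hS, hi]⟩
        set i0 : Fin n := S.min' hSne with hi0
        have hi0mem : α i0 ≠ 0 := by
          have := S.min'_mem hSne
          simpa [hS] using this
        have hi0min : ∀ j, j < i0 → α j = 0 := by
          intro j hj
          by_contra hjne
          have : i0 ≤ j := S.min'_le j (by simp [hS, hjne])
          exact absurd hj (not_lt_of_ge this)
        rw [Finset.sum_eq_single_of_mem i0 (Finset.mem_univ i0)]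
        · rw [if_pos ⟨Nat.one_le_iff_ne_zero.mpr hi0mem, hi0min⟩]
        · intro b _ hb
          rw [if_neg]
          rintro ⟨hb1, hb2⟩
          rcases lt_trichotomy b i0 with h | h | h
          · rw [hi0min b h] at hb1; omega
          · exact hb h
          · exact hi0mem (hb2 i0 h)
    rw [hdecomp]
    apply Submodule.sum_mem
    intro i _
    rw [pow_succ']
    refine Submodule.mul_mem_mul (Ideal.subset_span ⟨i, rfl⟩) (ih (g i) ?_)
    intro β hβ
    rw [hcg]
    split_ifs with hcond
    · apply hf
      rw [degF_add, degF_single]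
      omega
    · rfl

/-- Abbreviation for `ℝ⟦x⟧ᵖ`. -/
abbrev PSV (n p : ℕ) := Fin p → MvPowerSeries (Fin n) ℝ

/-- The monomial `x^{(β,j)}`. -/
def monoV (d : Idx n p) : PSV n p := Pi.single d.2 (monomial (R := ℝ) d.1 1)

/-- The coefficient functional `F ↦ F_{(α,j)}` as an `ℝ`-linear map. -/
def coeffV (e : Idx n p) : PSV n p →ₗ[ℝ] ℝ :=
  (MvPowerSeries.coeff (R := ℝ) e.1).comp (LinearMap.proj e.2)

lemma coeffV_apply (e : Idx n p) (F : PSV n p) : coeffV e F = coeff (R := ℝ) e.1 (F e.2) := rfl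

lemma coeffV_mono (e d : Idx n p) : coeffV e (monoV d) = if e = d then 1 else 0 := by
  rw [coeffV_apply]
  unfold monoV
  by_cases h2 : e.2 = d.2
  · rw [h2, Pi.single_eq_same, coeff_monomial]
    by_cases h1 : e.1 = d.1
    · rw [if_pos h1, if_pos (Prod.ext h1 h2)]
    · rw [if_neg h1, if_neg (fun h => h1 (congrArg Prod.fst h))]
  · rw [Pi.single_eq_of_ne h2, map_zero, if_neg (fun h => h2 (congrArg Prod.snd h))]

lemma suppV_iff (F : PSV n p) (e : Idx n p) : e ∈ suppV F ↔ coeffV e F ≠ 0 := Iff.rfl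

lemma existsExp {F : PSV n p} (hF : F ≠ 0) : ∃ d, IsExpOf F d := by
  have hne : (suppV F).Nonempty := by
    obtain ⟨j, hj⟩ := Function.ne_iff.mp hF
    have : ∃ α, coeff (R := ℝ) α (F j) ≠ 0 := by
      by_contra h
      push_neg at h
      have h0 : F j = 0 := MvPowerSeries.ext fun α => by rw [h α, map_zero]
      exact hj (h0.trans rfl)
    obtain ⟨α, hα⟩ := this
    exact ⟨(α, j), hα⟩
  obtain ⟨m, hm, hmin⟩ := WellFounded.has_min idxLT_wf _ hne
  refine ⟨m, hm, fun d' hd' => ?_⟩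
  rcases idxLT_trichotomy m d' with h | h | h
  · exact Or.inl h
  · exact Or.inr h
  · exact absurd h (hmin d' hd')

lemma finite_degLE (r : ℕ) : {d : Idx n p | degF d.1 ≤ r}.Finite := by
  have h1 : {α : Fin n →₀ ℕ | degF α ≤ r}.Finite := by
    refine (Set.finite_Icc 0 (Finsupp.equivFunOnFinite.symm fun _ => r)).subset ?_
    intro α hα
    refine ⟨zero_le, ?_⟩
    intro i
    have h2 : α i ≤ degF α := Finset.single_le_sum (fun j _ => Nat.zero_le _) (Finset.mem_univ i)
    exact le_trans h2 hα
  have h2 : {d : Idx n p | degF d.1 ≤ r} ⊆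
      {α : Fin n →₀ ℕ | degF α ≤ r} ×ˢ (Set.univ : Set (Fin p)) := fun d hd => ⟨hd, trivial⟩
  exact (h1.prod Set.finite_univ).subset h2

/-- The finite set of indices of degree at most `r`. -/
def SR (n p r : ℕ) : Finset (Idx n p) := (finite_degLE (n := n) (p := p) r).toFinset

lemma mem_SR {r : ℕ} {d : Idx n p} : d ∈ SR n p r ↔ degF d.1 ≤ r := by
  unfold SR
  rw [Set.Finite.mem_toFinset]
  rfl

lemma coeffV_sum_mono (S : Finset (Idx n p)) (c : Idx n p → ℝ) (e : Idx n p) :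
    coeffV e (∑ d ∈ S, c d • monoV d) = if e ∈ S then c e else 0 := by
  rw [map_sum]
  simp_rw [map_smul, coeffV_mono, smul_eq_mul, mul_ite, mul_one, mul_zero]
  rw [Finset.sum_ite_eq]

lemma highMem {r : ℕ} {H : PSV n p} (h : ∀ e : Idx n p, degF e.1 ≤ r → coeffV e H = 0) :
    H ∈ (mxI n ^ (r + 1)) • (⊤ : Submodule (MvPowerSeries (Fin n) ℝ) (PSV n p)) := by
  have hH : H = ∑ j : Fin p, (H j) • (Pi.single j 1 : PSV n p) := by
    funext k
    rw [Finset.sum_apply]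
    rw [Finset.sum_eq_single_of_mem k (Finset.mem_univ k)]
    · rw [Pi.smul_apply, Pi.single_eq_same, smul_eq_mul, mul_one]
    · intro j _ hj
      rw [Pi.smul_apply, Pi.single_eq_of_ne (Ne.symm hj), smul_eq_mul, mul_zero]
  rw [hH]
  apply Submodule.sum_mem
  intro j _
  refine Submodule.smul_mem_smul ?_ trivial
  apply mem_pow_of_coeff
  intro α hα
  have := h (α, j) (Nat.lt_succ_iff.mp hα)
  rwa [coeffV_apply] at this

lemma coeff_of_highMem {r : ℕ} {H : PSV n p}
    (h : H ∈ (mxI n ^ (r + 1)) • (⊤ : Submodule (MvPowerSeries (Fin n) ℝ) (PSV n p))) :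
    ∀ e : Idx n p, degF e.1 ≤ r → coeffV e H = 0 := by
  refine Submodule.smul_induction_on h ?_ ?_
  · intro a ha v _ e he
    rw [coeffV_apply, Pi.smul_apply, smul_eq_mul, coeff_mul]
    apply Finset.sum_eq_zero
    rintro ⟨β, γ⟩ hmem
    rw [Finset.HasAntidiagonal.mem_antidiagonal] at hmem
    have hβ : degF β < r + 1 := by
      have : degF β + degF γ = degF e.1 := by rw [← degF_add, hmem]
      omega
    rw [coeff_eq_zero_of_mem_pow (r + 1) a ha β hβ, zero_mul]
  · intro x y hx hy e he
    rw [map_add, hx e he, hy e he, add_zero]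


/-- The span of monomials with exponents in the complement of the diagram, degree ≤ r. -/
def spanA (M : Submodule (MvPowerSeries (Fin n) ℝ) (PSV n p)) (r : ℕ) :
    Submodule ℝ (PSV n p) :=
  Submodule.span ℝ
    (Set.range fun d : {d : Idx n p // d ∈ (diagramOf M)ᶜ ∧ degF d.1 ≤ r} => monoV d.1)

/-- Hironaka division: every monomial of degree at most `r` lies in
`spanA M r ⊔ (M + (x)^{r+1}ℝ⟦x⟧ᵖ)`. -/
lemma monoV_mem_div (M : Submodule (MvPowerSeries (Fin n) ℝ) (PSV n p)) (r : ℕ) :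
    ∀ N : ℕ, ∀ d : Idx n p, degF d.1 ≤ r →
      ((SR n p r).filter (fun e => idxLT d e)).card ≤ N →
      monoV d ∈ spanA M r ⊔ Submodule.restrictScalars ℝ
        (M ⊔ (mxI n ^ (r + 1)) • (⊤ : Submodule (MvPowerSeries (Fin n) ℝ) (PSV n p))) := by
  intro N
  induction N using Nat.strong_induction_on with
  | _ N ih =>
  intro d hdeg hcard
  by_cases hd : d ∈ diagramOf M
  · obtain ⟨F, hFM, hF0, hexp⟩ := hd
    set c : ℝ := coeffV d F with hc
    have hc0 : c ≠ 0 := hexp.1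
    set T : PSV n p := F - c • monoV d with hT
    have hTd : coeffV d T = 0 := by
      rw [hT, map_sub, map_smul, coeffV_mono, if_pos rfl, smul_eq_mul, mul_one, sub_self]
    have hTsupp : ∀ e : Idx n p, coeffV e T ≠ 0 → idxLT d e := by
      intro e he
      have hne : e ≠ d := fun h => he (h ▸ hTd)
      have heF : coeffV e T = coeffV e F := by
        rw [hT, map_sub, map_smul, coeffV_mono, if_neg hne, smul_zero, sub_zero]
      have hmem : e ∈ suppV F := by
        rw [suppV_iff, ← heF]
        exact he
      rcases hexp.2 e hmem with h | h
      · exact h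
      · exact absurd h.symm hne
    set Tlow : PSV n p := ∑ e ∈ SR n p r, coeffV e T • monoV e with hTlow
    have hTlow_mem : Tlow ∈ spanA M r ⊔ Submodule.restrictScalars ℝ
        (M ⊔ (mxI n ^ (r + 1)) • ⊤) := by
      rw [hTlow]
      apply Submodule.sum_mem
      intro e heS
      by_cases hce : coeffV e T = 0
      · rw [hce, zero_smul]; exact Submodule.zero_mem _
      · apply Submodule.smul_mem
        have hde : idxLT d e := hTsupp e hce
        have hlt : ((SR n p r).filter (fun x => idxLT e x)).card <
            ((SR n p r).filter (fun x => idxLT d x)).card := by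
          apply Finset.card_lt_card
          constructor
          · intro x hx
            rw [Finset.mem_filter] at hx ⊢
            exact ⟨hx.1, idxLT_trans hde hx.2⟩
          · intro hsub
            have he1 : e ∈ (SR n p r).filter (fun x => idxLT d x) := by
              rw [Finset.mem_filter]; exact ⟨heS, hde⟩
            have he2 := hsub he1
            rw [Finset.mem_filter] at he2
            exact idxLT_irrefl e he2.2
        exact ih ((SR n p r).filter (fun x => idxLT e x)).card
          (lt_of_lt_of_le hlt hcard) e (mem_SR.mp heS) le_rfl
    have hThigh : T - Tlow ∈ Submodule.restrictScalars ℝ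
        (M ⊔ (mxI n ^ (r + 1)) • (⊤ : Submodule (MvPowerSeries (Fin n) ℝ) (PSV n p))) := by
      rw [Submodule.restrictScalars_mem]
      apply Submodule.mem_sup_right
      apply highMem
      intro e he
      rw [map_sub, hTlow, coeffV_sum_mono, if_pos (mem_SR.mpr he), sub_self]
    have hFmem : F ∈ spanA M r ⊔ Submodule.restrictScalars ℝ
        (M ⊔ (mxI n ^ (r + 1)) • ⊤) :=
      Submodule.mem_sup_right (Submodule.mem_sup_left hFM)
    have key : monoV d = c⁻¹ • F - c⁻¹ • (Tlow + (T - Tlow)) := by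
      rw [add_sub_cancel, ← smul_sub, hT, sub_sub_cancel, smul_smul,
        inv_mul_cancel₀ hc0, one_smul]
    rw [key]
    exact sub_mem (Submodule.smul_mem _ _ hFmem)
      (Submodule.smul_mem _ _ (add_mem hTlow_mem (Submodule.mem_sup_right hThigh)))
  · exact Submodule.mem_sup_left (Submodule.subset_span ⟨⟨d, ⟨hd, hdeg⟩⟩, rfl⟩)

end Stmt6Aux


/-- Let `M` be a submodule of `ℝ⟦x₁,…,xₙ⟧ᵖ` and `r ∈ ℕ`. The monomials
`x^{(β,i)}` with `(β,i)` in the complement `Δ` of `𝒩(M)` and `|β| ≤ r` form a basis of an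
`ℝ`-linear complement of `M + (x)^{r+1}ℝ⟦x⟧ᵖ` in `ℝ⟦x⟧ᵖ`. -/
theorem stmt6 {n p : ℕ}
    (M : Submodule (MvPowerSeries (Fin n) ℝ) (Fin p → MvPowerSeries (Fin n) ℝ)) (r : ℕ) :
    LinearIndependent ℝ
      (fun d : {d : Idx n p // d ∈ (diagramOf M)ᶜ ∧ degF d.1 ≤ r} =>
        (Pi.single d.1.2 (MvPowerSeries.monomial (R := ℝ) d.1.1 1) :
          Fin p → MvPowerSeries (Fin n) ℝ)) ∧
    IsCompl
      (Submodule.span ℝ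
        (Set.range fun d : {d : Idx n p // d ∈ (diagramOf M)ᶜ ∧ degF d.1 ≤ r} =>
          (Pi.single d.1.2 (MvPowerSeries.monomial (R := ℝ) d.1.1 1) :
            Fin p → MvPowerSeries (Fin n) ℝ)))
      (Submodule.restrictScalars ℝ
        (M ⊔ ((Ideal.span (Set.range (MvPowerSeries.X : Fin n → MvPowerSeries (Fin n) ℝ)))
            ^ (r + 1) •
          (⊤ : Submodule (MvPowerSeries (Fin n) ℝ) (Fin p → MvPowerSeries (Fin n) ℝ))))) := by
  
  classical
  constructor
  · rw [linearIndependent_iff']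
    intro s g hsum i hi
    have hsum' : ∑ j ∈ s, g j • monoV (j : Idx n p) = 0 := by
      rw [← hsum]
      apply Finset.sum_congr rfl
      intro j _
      rfl
    have h := congrArg (coeffV (i : Idx n p)) hsum'
    rw [map_sum, map_zero,
      Finset.sum_eq_single_of_mem i hi (fun j _ hji => by
        rw [map_smul, coeffV_mono, if_neg (fun hh => hji (Subtype.ext hh.symm)), smul_zero]),
      map_smul, coeffV_mono, if_pos rfl, smul_eq_mul, mul_one] at h
    exact h
  · constructor
    · rw [Submodule.disjoint_def]
      intro G hGA hGB
      by_contra hG0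
      have hGA' : G ∈ spanA M r := hGA
      have hsupp : ∀ e : Idx n p, (e ∈ diagramOf M ∨ r < degF e.1) → coeffV e G = 0 := by
        intro e he
        have hker : spanA M r ≤ LinearMap.ker (coeffV e) := by
          rw [spanA, Submodule.span_le]
          rintro _ ⟨d, rfl⟩
          rw [SetLike.mem_coe, LinearMap.mem_ker, coeffV_mono, if_neg]
          intro hh
          rcases he with he | he
          · exact d.2.1 (hh ▸ he)
          · rw [hh] at he
            exact absurd d.2.2 (not_le.mpr he)
        exact LinearMap.mem_ker.mp (hker hGA')
      have hGB' : G ∈ M ⊔ (mxI n ^ (r + 1)) •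
          (⊤ : Submodule (MvPowerSeries (Fin n) ℝ) (PSV n p)) := hGB
      obtain ⟨F, hF, H, hH, hFH⟩ := Submodule.mem_sup.mp hGB'
      have hEx : ∃ e : Idx n p, coeffV e G ≠ 0 := by
        by_contra h
        push_neg at h
        apply hG0
        funext j
        show G j = (0 : MvPowerSeries (Fin n) ℝ)
        apply MvPowerSeries.ext
        intro α
        have h2 : MvPowerSeries.coeff (R := ℝ) α (G j) = 0 := h (α, j)
        rw [h2, map_zero]
      obtain ⟨e, he⟩ := hEx
      have heN : e ∉ diagramOf M := fun h => he (hsupp e (Or.inl h))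
      have hedeg : degF e.1 ≤ r := by
        by_contra h
        exact he (hsupp e (Or.inr (not_le.mp h)))
      have hHe : coeffV e H = 0 := coeff_of_highMem hH e hedeg
      have hGe : coeffV e G = coeffV e F := by rw [← hFH, map_add, hHe, add_zero]
      have hFe : coeffV e F ≠ 0 := by rw [← hGe]; exact he
      have hF0 : F ≠ 0 := fun h => hFe (by rw [h, map_zero])
      obtain ⟨dm, hdm⟩ := existsExp hF0
      have hdmN : dm ∈ diagramOf M := ⟨F, hF, hF0, hdm⟩
      have hdmdeg : degF dm.1 ≤ r := le_trans (idxLE_deg (hdm.2 e hFe)) hedeg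
      have hdmG : coeffV dm G = coeffV dm F := by
        rw [← hFH, map_add, coeff_of_highMem hH dm hdmdeg, add_zero]
      have hne : coeffV dm G ≠ 0 := by
        rw [hdmG]
        exact hdm.1
      exact hne (hsupp dm (Or.inl hdmN))
    · rw [codisjoint_iff, Submodule.eq_top_iff']
      intro G
      have h1 : (∑ e ∈ SR n p r, coeffV e G • monoV e) ∈
          spanA M r ⊔ Submodule.restrictScalars ℝ
            (M ⊔ (mxI n ^ (r + 1)) • (⊤ : Submodule (MvPowerSeries (Fin n) ℝ) (PSV n p))) :=
        Submodule.sum_mem _ fun e he =>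
          Submodule.smul_mem _ _ (monoV_mem_div M r _ e (mem_SR.mp he) le_rfl)
      have h2 : G - (∑ e ∈ SR n p r, coeffV e G • monoV e) ∈
          spanA M r ⊔ Submodule.restrictScalars ℝ
            (M ⊔ (mxI n ^ (r + 1)) • (⊤ : Submodule (MvPowerSeries (Fin n) ℝ) (PSV n p))) := by
        apply Submodule.mem_sup_right
        rw [Submodule.restrictScalars_mem]
        apply Submodule.mem_sup_right
        apply highMem
        intro e hedeg
        rw [map_sub, coeffV_sum_mono, if_pos (mem_SR.mpr hedeg), sub_self]
      have h3 := add_mem h1 h2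
      rw [add_sub_cancel] at h3
      exact h3
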